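/- If a circuit consists of Clifford gates and t T-gates, then the conjugate U† P U of any Pauli string P by the circuit is a real linear combination of at most 2^t Pauli strings (up to phases). -/

import Mathlib

open Matrix

noncomputable def pauli : Fin 4 → Matrix (Fin 2) (Fin 2) ℂ
  | 0 => !![1, 0; 0, 1]
  | 1 => !![0, 1; 1, 0]
  | 2 => !![0, -Complex.I; Complex.I, 0]
  | 3 => !![1, 0; 0, -1]

noncomputable def pauliString (l : ℕ) (a : Fin l → Fin 4) :
    Matrix (Fin l → Fin 2) (Fin l → Fin 2) ℂ :=
  fun i j => ∏ k, pauli (a k) (i k) (j k)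

/-- The T gate acting on qubit `k` of `l` qubits: the diagonal matrix with entry
`e^{iπ/4}` when the `k`-th bit is `1`. -/
noncomputable def TgateOn (l : ℕ) (k : Fin l) :
    Matrix (Fin l → Fin 2) (Fin l → Fin 2) ℂ :=
  fun i j => if i = j then Complex.exp (Complex.I * Real.pi / 4 * ((i k : ℕ) : ℂ)) else 0

/-- A Clifford gate: a unitary mapping every Pauli string to a Pauli string up to sign
under conjugation. -/
def IsCliffordGate (l : ℕ) (G : Matrix (Fin l → Fin 2) (Fin l → Fin 2) ℂ) : Prop :=
  G ∈ Matrix.unitaryGroup (Fin l → Fin 2) ℂ ∧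
  ∀ a : Fin l → Fin 4, ∃ (s : ℂ) (b : Fin l → Fin 4),
    (s = 1 ∨ s = -1) ∧ Gᴴ * pauliString l a * G = s • pauliString l b

def Combo (l n : ℕ) (M : Matrix (Fin l → Fin 2) (Fin l → Fin 2) ℂ) : Prop :=
  ∃ (S : Finset (Fin l → Fin 4)) (c : (Fin l → Fin 4) → ℂ),
    S.card ≤ n ∧ M = ∑ b ∈ S, c b • pauliString l b

variable {l : ℕ}

lemma Combo.mono {n m M} (h : Combo l n M) (hnm : n ≤ m) : Combo l m M := by
  obtain ⟨S, c, hS, hM⟩ := h; exact ⟨S, c, hS.trans hnm, hM⟩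

lemma Combo.zero : Combo l 0 0 := ⟨∅, 0, by simp, by simp⟩

lemma combo_smul_pauli (s : ℂ) (a : Fin l → Fin 4) : Combo l 1 (s • pauliString l a) :=
  ⟨{a}, fun _ => s, by simp, by simp⟩

lemma Combo.add {m n : ℕ} {M N} (hM : Combo l m M) (hN : Combo l n N) :
    Combo l (m + n) (M + N) := by
  obtain ⟨S, c, hS, rfl⟩ := hM
  obtain ⟨T, d, hT, rfl⟩ := hN
  refine ⟨S ∪ T, fun b => (if b ∈ S then c b else 0) + (if b ∈ T then d b else 0), ?_, ?_⟩
  · exact le_trans (Finset.card_union_le _ _) (add_le_add hS hT)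
  · rw [Finset.sum_congr rfl (fun b _ => add_smul _ _ _), Finset.sum_add_distrib]
    congr 1
    · symm
      rw [Finset.sum_congr rfl (fun b _ => by rw [ite_smul, zero_smul]),
        Finset.sum_ite_mem, Finset.union_inter_cancel_left]
    · symm
      rw [Finset.sum_congr rfl (fun b _ => by rw [ite_smul, zero_smul]),
        Finset.sum_ite_mem, Finset.union_inter_cancel_right]

lemma Combo.smul {n M} (h : Combo l n M) (s : ℂ) : Combo l n (s • M) := by
  obtain ⟨S, c, hS, rfl⟩ := h
  exact ⟨S, fun b => s * c b, hS, by rw [Finset.smul_sum]; simp [smul_smul]⟩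

lemma Combo.sum {n : ℕ} (S₀ : Finset (Fin l → Fin 4))
    (F : (Fin l → Fin 4) → Matrix (Fin l → Fin 2) (Fin l → Fin 2) ℂ)
    (h : ∀ b ∈ S₀, Combo l n (F b)) : Combo l (S₀.card * n) (∑ b ∈ S₀, F b) := by
  induction S₀ using Finset.cons_induction with
  | empty => simpa using Combo.zero
  | cons b S₀ hb ih =>
    rw [Finset.sum_cons]
    have h1 := h b (Finset.mem_cons_self _ _)
    have h2 := ih (fun b' hb' => h b' (Finset.mem_cons_of_mem hb'))
    have := h1.add h2
    rw [Finset.card_cons]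
    exact this.mono (by ring_nf; omega)

lemma Combo.conj {n m : ℕ} {M} (h : Combo l n M)
    (W : Matrix (Fin l → Fin 2) (Fin l → Fin 2) ℂ)
    (hW : ∀ a, Combo l m (Wᴴ * pauliString l a * W)) :
    Combo l (n * m) (Wᴴ * M * W) := by
  obtain ⟨S, c, hS, rfl⟩ := h
  rw [Matrix.mul_sum, Finset.sum_mul]
  have : ∀ b ∈ S, Combo l m ((Wᴴ * (c b • pauliString l b)) * W) := by
    intro b _
    rw [Matrix.mul_smul, Matrix.smul_mul]
    exact (hW b).smul (c b)
  exact (Combo.sum S _ this).mono (Nat.mul_le_mul_right _ hS)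
variable {l : ℕ}

lemma TgateOn_eq_diagonal (k : Fin l) :
    TgateOn l k = Matrix.diagonal (fun i => Complex.exp (Complex.I * Real.pi / 4 * ((i k : ℕ) : ℂ))) := rfl

lemma Tconj_apply (k : Fin l) (a : Fin l → Fin 4) (i j : Fin l → Fin 2) :
    ((TgateOn l k)ᴴ * pauliString l a * TgateOn l k) i j =
      star (Complex.exp (Complex.I * Real.pi / 4 * ((i k : ℕ) : ℂ))) * pauliString l a i j *
        Complex.exp (Complex.I * Real.pi / 4 * ((j k : ℕ) : ℂ)) := by
  rw [TgateOn_eq_diagonal, Matrix.diagonal_conjTranspose]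
  simp [Matrix.mul_diagonal, Matrix.diagonal_mul, mul_comm, mul_assoc, mul_left_comm]

lemma pauliString_split (k : Fin l) (a : Fin l → Fin 4) (i j : Fin l → Fin 2) :
    pauliString l a i j =
      pauli (a k) (i k) (j k) * ∏ m ∈ Finset.univ.erase k, pauli (a m) (i m) (j m) := by
  rw [pauliString, ← Finset.mul_prod_erase _ _ (Finset.mem_univ k)]

lemma pauliString_update_split (k : Fin l) (a : Fin l → Fin 4) (v : Fin 4) (i j : Fin l → Fin 2) :
    pauliString l (Function.update a k v) i j =
      pauli v (i k) (j k) * ∏ m ∈ Finset.univ.erase k, pauli (a m) (i m) (j m) := by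
  rw [pauliString_split k]
  congr 1
  · rw [Function.update_self]
  · exact Finset.prod_congr rfl fun m hm => by
      rw [Function.update_of_ne (Finset.ne_of_mem_erase hm)]

lemma exp_zero' : Complex.exp (Complex.I * Real.pi / 4 * ((0 : ℂ))) = 1 := by
  simp

lemma exp_quarter : Complex.exp (Complex.I * Real.pi / 4 * 1) =
    ((Real.sqrt 2)⁻¹ : ℝ) * (1 + Complex.I) := by
  rw [show Complex.I * (Real.pi : ℂ) / 4 * 1 = ((Real.pi / 4 : ℝ) : ℂ) * Complex.I by
    push_cast; ring]
  rw [Complex.exp_mul_I, ← Complex.ofReal_cos, ← Complex.ofReal_sin]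
  rw [Real.cos_pi_div_four, Real.sin_pi_div_four]
  have h2 : (Real.sqrt 2 : ℝ) ≠ 0 := by positivity
  push_cast
  rw [show (Real.sqrt 2 : ℂ) / 2 = (Real.sqrt 2 : ℂ)⁻¹ by
    have hz : (Real.sqrt 2 : ℂ) ≠ 0 := by exact_mod_cast h2
    field_simp
    exact_mod_cast Real.sq_sqrt (by norm_num : (0:ℝ) ≤ 2)]
  ring

lemma star_exp_quarter : star (Complex.exp (Complex.I * Real.pi / 4 * 1)) =
    ((Real.sqrt 2)⁻¹ : ℝ) * (1 - Complex.I) := by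
  rw [exp_quarter]
  simp [star_mul', Complex.star_def, Complex.conj_ofReal]
  ring

lemma star_exp_nat (x : ℕ) : star (Complex.exp (Complex.I * Real.pi / 4 * (x:ℂ)))
    * Complex.exp (Complex.I * Real.pi / 4 * (x:ℂ)) = 1 := by
  rw [Complex.star_def, ← Complex.exp_conj, ← Complex.exp_add]
  rw [show (starRingEnd ℂ) (Complex.I * Real.pi / 4 * (x:ℂ)) + Complex.I * Real.pi / 4 * (x:ℂ) = 0 by
    simp [_root_.map_mul, map_div₀, Complex.conj_I, Complex.conj_ofReal, map_ofNat]; ring]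
  exact Complex.exp_zero

lemma exp_quarter' : Complex.exp (Complex.I * Real.pi / 4) =
    ((Real.sqrt 2)⁻¹ : ℝ) * (1 + Complex.I) := by
  rw [← mul_one (Complex.I * (Real.pi:ℂ) / 4)]; exact exp_quarter

lemma star_exp_quarter' : star (Complex.exp (Complex.I * Real.pi / 4)) =
    ((Real.sqrt 2)⁻¹ : ℝ) * (1 - Complex.I) := by
  rw [← mul_one (Complex.I * (Real.pi:ℂ) / 4)]; exact star_exp_quarter

lemma combo_pair (b1 b2 : Fin l → Fin 4) (hne : b1 ≠ b2) (c1 c2 : ℂ) :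
    Combo l 2 (c1 • pauliString l b1 + c2 • pauliString l b2) := by
  refine ⟨{b1, b2}, fun b => if b = b1 then c1 else c2, ?_, ?_⟩
  · exact le_trans (Finset.card_insert_le _ _) (by simp)
  · rw [Finset.sum_pair hne]
    simp [Ne.symm hne]

lemma Tconj (k : Fin l) (a : Fin l → Fin 4) :
    Combo l 2 ((TgateOn l k)ᴴ * pauliString l a * TgateOn l k) := by
  have hfin2 : ∀ z : Fin 2, z = 0 ∨ z = 1 := by decide
  have hfin4 : ∀ v : Fin 4, v = 0 ∨ v = 1 ∨ v = 2 ∨ v = 3 := by decide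
  have hne : Function.update a k (1:Fin 4) ≠ Function.update a k 2 := by
    intro h
    have := congrFun h k
    rw [Function.update_self, Function.update_self] at this
    exact absurd this (by decide)
  have hdiag : a k = 0 ∨ a k = 3 →
      (TgateOn l k)ᴴ * pauliString l a * TgateOn l k = pauliString l a := by
    intro hv
    ext i j
    rw [Tconj_apply]
    rcases eq_or_ne (i k) (j k) with h | h
    · rw [h, mul_right_comm, star_exp_nat, one_mul]
    · have hz : pauliString l a i j = 0 := by
        rw [pauliString_split k]
        have h0 : pauli (a k) (i k) (j k) = 0 := by
          rcases hv with hv | hv <;> rw [hv] <;>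
            rcases hfin2 (i k) with hx | hx <;> rcases hfin2 (j k) with hy | hy <;>
              rw [hx, hy] at h ⊢ <;> first
                | exact absurd rfl h
                | norm_num [pauli]
        rw [h0, zero_mul]
      rw [hz, mul_zero, zero_mul]
  have hoff : ∀ (c1 c2 : ℂ), (a k = 1 ∨ a k = 2) →
      (∀ x y : Fin 2,
        star (Complex.exp (Complex.I * Real.pi / 4 * ((x:ℕ):ℂ))) * pauli (a k) x y *
          Complex.exp (Complex.I * Real.pi / 4 * ((y:ℕ):ℂ)) =
        c1 * pauli 1 x y + c2 * pauli 2 x y) →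
      Combo l 2 ((TgateOn l k)ᴴ * pauliString l a * TgateOn l k) := by
    intro c1 c2 _ hsc
    have heq : (TgateOn l k)ᴴ * pauliString l a * TgateOn l k =
        c1 • pauliString l (Function.update a k 1) + c2 • pauliString l (Function.update a k 2) := by
      ext i j
      rw [Tconj_apply, pauliString_split k, Matrix.add_apply, Matrix.smul_apply,
        Matrix.smul_apply, pauliString_update_split, pauliString_update_split,
        smul_eq_mul, smul_eq_mul]
      have := hsc (i k) (j k)
      calc star (Complex.exp (Complex.I * Real.pi / 4 * ((i k : ℕ):ℂ))) *
            (pauli (a k) (i k) (j k) * ∏ m ∈ Finset.univ.erase k, pauli (a m) (i m) (j m)) *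
            Complex.exp (Complex.I * Real.pi / 4 * ((j k : ℕ):ℂ))
          = (star (Complex.exp (Complex.I * Real.pi / 4 * ((i k : ℕ):ℂ))) *
              pauli (a k) (i k) (j k) *
              Complex.exp (Complex.I * Real.pi / 4 * ((j k : ℕ):ℂ))) *
              ∏ m ∈ Finset.univ.erase k, pauli (a m) (i m) (j m) := by ring
        _ = (c1 * pauli 1 (i k) (j k) + c2 * pauli 2 (i k) (j k)) *
              ∏ m ∈ Finset.univ.erase k, pauli (a m) (i m) (j m) := by rw [this]
        _ = c1 * (pauli 1 (i k) (j k) * ∏ m ∈ Finset.univ.erase k, pauli (a m) (i m) (j m)) +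
              c2 * (pauli 2 (i k) (j k) * ∏ m ∈ Finset.univ.erase k, pauli (a m) (i m) (j m)) := by
            ring
    rw [heq]
    exact combo_pair _ _ hne c1 c2
  rcases hfin4 (a k) with hv | hv | hv | hv
  · rw [hdiag (Or.inl hv)]
    have h1 := combo_smul_pauli (1:ℂ) a
    rw [one_smul] at h1
    exact h1.mono one_le_two
  · refine hoff ((((Real.sqrt 2)⁻¹ : ℝ) : ℂ)) (-(((Real.sqrt 2)⁻¹ : ℝ) : ℂ)) (Or.inl hv) ?_
    intro x y
    rw [hv]
    rcases hfin2 x with hx | hx <;> rcases hfin2 y with hy | hy <;> rw [hx, hy] <;>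
      simp only [Fin.val_zero, Fin.val_one, Nat.cast_zero, Nat.cast_one, mul_zero, mul_one,
        Complex.exp_zero, star_one, exp_quarter', star_exp_quarter'] <;>
      norm_num [pauli] <;> ring_nf <;> simp [Complex.I_sq] <;> ring_nf
  · refine hoff ((((Real.sqrt 2)⁻¹ : ℝ) : ℂ)) ((((Real.sqrt 2)⁻¹ : ℝ) : ℂ)) (Or.inr hv) ?_
    intro x y
    rw [hv]
    rcases hfin2 x with hx | hx <;> rcases hfin2 y with hy | hy <;> rw [hx, hy] <;>
      simp only [Fin.val_zero, Fin.val_one, Nat.cast_zero, Nat.cast_one, mul_zero, mul_one,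
        Complex.exp_zero, star_one, exp_quarter', star_exp_quarter'] <;>
      norm_num [pauli] <;> ring_nf <;> simp [Complex.I_sq] <;> ring_nf
  · rw [hdiag (Or.inr hv)]
    have h1 := combo_smul_pauli (1:ℂ) a
    rw [one_smul] at h1
    exact h1.mono one_le_two

lemma main_combo (gates : List ((Matrix (Fin l → Fin 2) (Fin l → Fin 2) ℂ) ⊕ Fin l))
    (hC : ∀ G, Sum.inl G ∈ gates → IsCliffordGate l G) :
    ∀ a, Combo l (2 ^ (gates.countP Sum.isRight))
      (((gates.map (Sum.elim id (TgateOn l))).prod)ᴴ * pauliString l a *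
        (gates.map (Sum.elim id (TgateOn l))).prod) := by
  induction gates with
  | nil =>
    intro a
    simp only [List.map_nil, List.prod_nil, List.countP_nil, pow_zero, Matrix.conjTranspose_one,
      Matrix.one_mul, Matrix.mul_one]
    have h1 := combo_smul_pauli (1:ℂ) a
    rw [one_smul] at h1
    exact h1
  | cons g rest ih =>
    intro a
    have hrest := ih (fun G h => hC G (List.mem_cons_of_mem _ h))
    simp only [List.map_cons, List.prod_cons, List.countP_cons]
    set W := (rest.map (Sum.elim id (TgateOn l))).prod with hW
    set e := Sum.elim id (TgateOn l) g with he
    have hassoc : (e * W)ᴴ * pauliString l a * (e * W) =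
        Wᴴ * (eᴴ * pauliString l a * e) * W := by
      rw [Matrix.conjTranspose_mul]
      simp only [Matrix.mul_assoc]
    rw [hassoc]
    cases g with
    | inl G =>
      obtain ⟨s, b, _, hGb⟩ := (hC G List.mem_cons_self).2 a
      have heG : e = G := rfl
      rw [heG, hGb, Matrix.mul_smul, Matrix.smul_mul]
      have := (hrest b).smul s
      simpa using this
    | inr k =>
      have heT : e = TgateOn l k := rfl
      rw [heT]
      have := (Tconj k a).conj W hrest
      have hcnt : (List.countP Sum.isRight rest + if Sum.isRight (Sum.inr k : (Matrix (Fin l → Fin 2) (Fin l → Fin 2) ℂ) ⊕ Fin l) = true then 1 else 0) = List.countP Sum.isRight rest + 1 := by simp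
      rw [hcnt, pow_succ']
      exact this

/-- If a circuit consists of Clifford gates and `t` T-gates, then the conjugate of any
Pauli string by the circuit is a linear combination of at most `2^t` Pauli strings. -/
theorem near_clifford_pauli_conjugation (l : ℕ)
    (gates : List ((Matrix (Fin l → Fin 2) (Fin l → Fin 2) ℂ) ⊕ Fin l))
    (hC : ∀ G, Sum.inl G ∈ gates → IsCliffordGate l G)
    (t : ℕ) (ht : t = gates.countP Sum.isRight)
    (U : Matrix (Fin l → Fin 2) (Fin l → Fin 2) ℂ)
    (hU : U = (gates.map (Sum.elim id (TgateOn l))).prod) :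
    ∀ a : Fin l → Fin 4, ∃ (S : Finset (Fin l → Fin 4)) (c : (Fin l → Fin 4) → ℂ),
      S.card ≤ 2 ^ t ∧ Uᴴ * pauliString l a * U = ∑ b ∈ S, c b • pauliString l b := by
  intro a
  subst ht hU
  exact main_combo gates hC a
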